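/- Let p(x) = Σ_{k=0}^n α_{2k} x^{2k} be a real polynomial of degree 2n and set p̃(y) = Σ_{k=0}^n α_{2k} y^k (so p(x) = p̃(x²)). If p̃ has no negative real roots, then there exists a REAL polynomial q of degree n such that p = α_{2n} · q · q_-, where q_- is the polynomial with the same leading coefficient and opposite roots. -/

import Mathlib

open Polynomial

/-- `q_-`: the real polynomial with the same leading coefficient and opposite roots,
given by `q_-(x) = (-1)^n q(-x)` for `q` of degree `n`. -/
noncomputable def qMinusR (n : ℕ) (q : Polynomial ℝ) : Polynomial ℝ :=
  C ((-1 : ℝ) ^ n) * q.comp (-X)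

/-- Auxiliary predicate: `m(x²)` factors as `q(x) · (-1)^d q(-x)` with `q` monic of degree `d`. -/
def GoodFac (d : ℕ) (m : Polynomial ℝ) : Prop :=
  ∃ q : Polynomial ℝ, q.Monic ∧ q.natDegree = d ∧
    m.comp (X ^ 2) = q * (C ((-1 : ℝ) ^ d) * q.comp (-X))

lemma goodFac_one : GoodFac 0 1 :=
  ⟨1, monic_one, natDegree_one, by simp⟩

lemma goodFac_mul {d₁ d₂ : ℕ} {f g : Polynomial ℝ}
    (h₁ : GoodFac d₁ f) (h₂ : GoodFac d₂ g) : GoodFac (d₁ + d₂) (f * g) := by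
  obtain ⟨q₁, m₁, deg₁, e₁⟩ := h₁
  obtain ⟨q₂, m₂, deg₂, e₂⟩ := h₂
  refine ⟨q₁ * q₂, m₁.mul m₂, ?_, ?_⟩
  · rw [m₁.natDegree_mul m₂, deg₁, deg₂]
  · rw [mul_comp, e₁, e₂, mul_comp, pow_add, map_mul]
    ring

lemma goodFac_linear {r : ℝ} (hr : 0 ≤ r) : GoodFac 1 (X - C r) := by
  refine ⟨X - C (Real.sqrt r), monic_X_sub_C _, natDegree_X_sub_C _, ?_⟩
  have h : C r = C (Real.sqrt r) ^ 2 := by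
    rw [← C_pow, Real.sq_sqrt hr]
  simp only [sub_comp, X_comp, C_comp]
  rw [h]
  simp only [pow_one, map_neg, map_one]
  ring

lemma quad_monic (a b : ℝ) : (X ^ 2 + C a * X + C b).Monic := by
  have h2 : (C a * X + C b).degree < ((2 : ℕ) : WithBot ℕ) :=
    lt_of_le_of_lt degree_linear_le (by exact_mod_cast one_lt_two)
  have := monic_X_pow_add (n := 2) (p := C a * X + C b) h2
  simpa [add_assoc] using this

lemma quad_natDegree (a b : ℝ) : (X ^ 2 + C a * X + C b).natDegree = 2 := by
  have h : X ^ 2 + C a * X + C b = C (1 : ℝ) * X ^ 2 + C a * X + C b := by simp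
  rw [h, natDegree_quadratic one_ne_zero]

lemma goodFac_quadratic (u v : ℝ) :
    GoodFac 2 (X ^ 2 + C (2 * v - u ^ 2) * X + C (v ^ 2)) := by
  refine ⟨X ^ 2 + C u * X + C v, quad_monic u v, quad_natDegree u v, ?_⟩
  have h1 : C (v ^ 2) = C v ^ 2 := by rw [C_pow]
  have h2 : C (2 * v - u ^ 2) = 2 * C v - C u ^ 2 := by
    rw [map_sub, C_mul, C_pow, map_ofNat]
  simp only [add_comp, mul_comp, X_comp, C_comp, pow_comp, neg_one_sq, map_one]
  rw [h1, h2]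
  ring

lemma goodFac_of_monic : ∀ d : ℕ, ∀ m : Polynomial ℝ, m.Monic → m.natDegree = d →
    (∀ y : ℝ, y < 0 → m.eval y ≠ 0) → GoodFac d m := by
  intro d
  induction d using Nat.strong_induction_on with
  | _ d IH =>
    intro m hm hd hneg
    rcases Nat.eq_zero_or_pos d with h0 | hpos
    · subst h0
      have : m = 1 := (hm.natDegree_eq_zero).mp hd
      rw [this]; exact goodFac_one
    by_cases hroot : ∃ r : ℝ, m.IsRoot r
    · -- real root case
      obtain ⟨r, hr⟩ := hroot
      have hr0 : 0 ≤ r := le_of_not_gt fun h => hneg r h hr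
      set m' := m /ₘ (X - C r) with hm'def
      have hfac : (X - C r) * m' = m := mul_divByMonic_eq_iff_isRoot.mpr hr
      have hm' : m'.Monic := (monic_X_sub_C r).of_mul_monic_left (by rw [hfac]; exact hm)
      have hdeg' : 1 + m'.natDegree = d := by
        rw [← hd, ← hfac, (monic_X_sub_C r).natDegree_mul hm', natDegree_X_sub_C]
      have hneg' : ∀ y : ℝ, y < 0 → m'.eval y ≠ 0 := by
        intro y hy h0
        apply hneg y hy
        rw [← hfac, eval_mul, h0, mul_zero]
      have hlt : m'.natDegree < d := by omega
      have := IH m'.natDegree hlt m' hm' rfl hneg'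
      have := goodFac_mul (goodFac_linear hr0) this
      rw [hdeg', hfac] at this
      exact this
    · -- no real root: take complex root
      push_neg at hroot
      set M := m.map (algebraMap ℝ ℂ) with hM
      have hMdeg : M.natDegree = d := by rw [hM, natDegree_map, hd]
      have hMpos : 0 < M.degree := by
        rw [← natDegree_pos_iff_degree_pos, hMdeg]; exact hpos
      obtain ⟨z, hz⟩ := Complex.exists_root hMpos
      have hz' : (aeval z) m = 0 := by
        rw [aeval_def, ← eval_map]; exact hz
      have him : z.im ≠ 0 := by
        intro h
        apply hroot z.re
        have : z = ((z.re : ℝ) : ℂ) := by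
          apply Complex.ext <;> simp [h]
        rw [this] at hz'
        have : ((m.eval z.re : ℝ) : ℂ) = 0 := by
          rw [← hz']
          simpa using (aeval_algebraMap_apply ℂ (z.re : ℝ) m).symm
        exact_mod_cast this
      have hzconj : (aeval ((starRingEnd ℂ) z)) m = 0 := by
        rw [aeval_conj, hz', map_zero]
      have hzc : (starRingEnd ℂ) z ≠ z := fun h => him (Complex.conj_eq_iff_im.mp h)
      -- the real quadratic factor
      set v : ℝ := ‖z‖ with hv
      set u : ℝ := Real.sqrt (2 * v + 2 * z.re) with hu
      have huvnn : 0 ≤ 2 * v + 2 * z.re := by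
        have := Complex.abs_re_le_norm z
        have := abs_le.mp this
        nlinarith
      have hu2 : u ^ 2 = 2 * v + 2 * z.re := Real.sq_sqrt huvnn
      set f : Polynomial ℝ := X ^ 2 + C (2 * v - u ^ 2) * X + C (v ^ 2) with hf
      have hfmonic : f.Monic := quad_monic _ _
      -- f maps to (X - C z)(X - C z̄) over ℂ
      have hfmap : f.map (algebraMap ℝ ℂ) = (X - C z) * (X - C ((starRingEnd ℂ) z)) := by
        have h1 : ((v ^ 2 : ℝ) : ℂ) = z * (starRingEnd ℂ) z := by
          calc ((v ^ 2 : ℝ) : ℂ) = ((Complex.normSq z : ℝ) : ℂ) := by rw [hv, Complex.sq_norm]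
            _ = z * (starRingEnd ℂ) z := (Complex.mul_conj z).symm
        have h2 : ((2 * v - u ^ 2 : ℝ) : ℂ) = -(z + (starRingEnd ℂ) z) := by
          rw [hu2, Complex.add_conj]
          push_cast
          ring
        simp only [hf, Polynomial.map_add, Polynomial.map_mul, Polynomial.map_pow, map_X, map_C,
          Complex.coe_algebraMap]
        rw [h2, h1, map_neg, map_add, C_mul]
        ring
      -- f divides m
      have hdvd : f ∣ m := by
        rw [← map_dvd_map (algebraMap ℝ ℂ) (algebraMap ℝ ℂ).injective hfmonic, hfmap, ← hM]
        -- (X - C z) * (X - C z̄) ∣ M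
        have hg : (X - C z) * (M /ₘ (X - C z)) = M := mul_divByMonic_eq_iff_isRoot.mpr hz
        set g := M /ₘ (X - C z) with hgdef
        have hgz : g.IsRoot ((starRingEnd ℂ) z) := by
          have hev : M.eval ((starRingEnd ℂ) z) = 0 := by
            rw [hM, eval_map, ← aeval_def]; exact hzconj
          rw [← hg, eval_mul] at hev
          rcases mul_eq_zero.mp hev with h | h
          · simp only [eval_sub, eval_X, eval_C, sub_eq_zero] at h
            exact absurd h hzc
          · exact h
        obtain ⟨g₂, hg2⟩ : ∃ g₂, g = (X - C ((starRingEnd ℂ) z)) * g₂ :=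
          ⟨_, (mul_divByMonic_eq_iff_isRoot.mpr hgz).symm⟩
        exact ⟨g₂, by rw [← hg, hg2]; ring⟩
      obtain ⟨m', hfac⟩ := hdvd
      have hm' : m'.Monic := hfmonic.of_mul_monic_left (by rw [← hfac]; exact hm)
      have hdeg' : 2 + m'.natDegree = d := by
        rw [← hd, hfac, hfmonic.natDegree_mul hm', quad_natDegree]
      -- f has no real roots (positive definite)
      have hfpos : ∀ y : ℝ, 0 < f.eval y := by
        intro y
        have : f.eval y = (y - z.re) ^ 2 + z.im ^ 2 := by
          simp only [hf, eval_add, eval_mul, eval_pow, eval_X, eval_C]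
          rw [hu2, hv, show ‖z‖ ^ 2 = z.re ^ 2 + z.im ^ 2 by
            rw [Complex.sq_norm, Complex.normSq_apply]; ring]
          ring
        rw [this]
        have : z.im ^ 2 > 0 := by positivity
        nlinarith [sq_nonneg (y - z.re)]
      have hneg' : ∀ y : ℝ, y < 0 → m'.eval y ≠ 0 := by
        intro y hy h0
        apply hneg y hy
        rw [hfac, eval_mul, h0, mul_zero]
      have hlt : m'.natDegree < d := by omega
      have := IH m'.natDegree hlt m' hm' rfl hneg'
      have := goodFac_mul (goodFac_quadratic u v) this
      rw [hdeg', ← hfac] at this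
      exact this

theorem even_poly_real_factorization (n : ℕ) (p : Polynomial ℝ)
    (hdeg : p.natDegree = 2 * n)
    (hlead : p.coeff (2 * n) ≠ 0)
    (heven : ∀ k, Odd k → p.coeff k = 0)
    (hnoneg : ∀ y : ℝ, y < 0 →
      (∑ k ∈ Finset.range (n + 1), p.coeff (2 * k) * y ^ k) ≠ 0) :
    ∃ q : Polynomial ℝ, q.Monic ∧ q.natDegree = n ∧
      p = C (p.coeff (2 * n)) * q * qMinusR n q := by
  set α := p.coeff (2 * n) with hα
  set pt : Polynomial ℝ := ∑ k ∈ Finset.range (n + 1), C (p.coeff (2 * k)) * X ^ k with hpt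
  -- coefficients of pt
  have hptc : ∀ j, pt.coeff j = if j ≤ n then p.coeff (2 * j) else 0 := by
    intro j
    rw [hpt, finset_sum_coeff]
    simp only [coeff_C_mul, coeff_X_pow, mul_ite, mul_one, mul_zero, Finset.sum_ite_eq,
      Finset.mem_range, Nat.lt_succ_iff]
  -- p = pt.comp (X^2)
  have hcomp : p = pt.comp (X ^ 2) := by
    have h1 : pt.comp (X ^ 2) = ∑ k ∈ Finset.range (n + 1), C (p.coeff (2 * k)) * X ^ (2 * k) := by
      rw [hpt, comp, eval₂_finset_sum]
      refine Finset.sum_congr rfl fun k _ => ?_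
      rw [eval₂_mul, eval₂_C, eval₂_X_pow, ← pow_mul]
    ext j
    rw [h1, finset_sum_coeff]
    simp only [coeff_C_mul, coeff_X_pow]
    symm
    rcases Nat.even_or_odd j with ⟨k₀, hk₀⟩ | hodd
    · have hj2 : j = 2 * k₀ := by omega
      subst hj2
      by_cases hk : k₀ ≤ n
      · rw [Finset.sum_eq_single_of_mem k₀ (Finset.mem_range.mpr (by omega))
          (fun k _ hk' => by rw [if_neg (by omega), mul_zero])]
        rw [if_pos rfl, mul_one]
      · have h0 : p.coeff (2 * k₀) = 0 :=
          coeff_eq_zero_of_natDegree_lt (by rw [hdeg]; omega)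
        rw [h0]
        refine Finset.sum_eq_zero fun k hk' => ?_
        have hkn : k ≤ n := by simpa [Nat.lt_succ_iff] using hk'
        rw [if_neg (by omega), mul_zero]
    · obtain ⟨l, hl⟩ := hodd
      rw [heven j ⟨l, hl⟩]
      refine Finset.sum_eq_zero fun k _ => ?_
      rw [if_neg (by omega), mul_zero]
  -- degree and leading coefficient of pt
  have hptn : pt.coeff n = α := by rw [hptc]; simp [hα]
  have hptdeg : pt.natDegree = n := by
    apply le_antisymm
    · rw [natDegree_le_iff_coeff_eq_zero]
      intro N hN
      rw [hptc, if_neg (by omega)]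
    · exact le_natDegree_of_ne_zero (by rw [hptn]; exact hlead)
  have hptlead : pt.leadingCoeff = α := by
    rw [leadingCoeff, hptdeg, hptn]
  -- the monic normalization
  set m : Polynomial ℝ := C α⁻¹ * pt with hm
  have hmmonic : m.Monic := by
    have : m.leadingCoeff = 1 := by
      rw [hm, leadingCoeff_mul, leadingCoeff_C, hptlead, inv_mul_cancel₀ hlead]
    exact this
  have hmdeg : m.natDegree = n := by
    rw [hm, natDegree_C_mul (inv_ne_zero hlead), hptdeg]
  have hmneg : ∀ y : ℝ, y < 0 → m.eval y ≠ 0 := by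
    intro y hy h0
    apply hnoneg y hy
    have hpt_eval : pt.eval y = ∑ k ∈ Finset.range (n + 1), p.coeff (2 * k) * y ^ k := by
      rw [hpt, eval_finset_sum]
      refine Finset.sum_congr rfl fun k _ => ?_
      rw [eval_mul, eval_C, eval_pow, eval_X]
    rw [hm, eval_mul, eval_C, mul_eq_zero] at h0
    rcases h0 with h | h
    · exact absurd h (inv_ne_zero hlead)
    · rw [← hpt_eval]; exact h
  obtain ⟨q, hqmonic, hqdeg, hq⟩ := goodFac_of_monic n m hmmonic hmdeg hmneg
  refine ⟨q, hqmonic, hqdeg, ?_⟩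
  have hrecover : C α * m = pt := by
    rw [hm, ← mul_assoc, ← C_mul, mul_inv_cancel₀ hlead, C_1, one_mul]
  calc p = pt.comp (X ^ 2) := hcomp
    _ = (C α * m).comp (X ^ 2) := by rw [hrecover]
    _ = C α * m.comp (X ^ 2) := by rw [mul_comp, C_comp]
    _ = C α * (q * (C ((-1 : ℝ) ^ n) * q.comp (-X))) := by rw [hq]
    _ = C α * q * qMinusR n q := by rw [qMinusR]; ring
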